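/- For each integer k ≥ 1 define the affine algebraic curve C_{2k} = {G(T_{2k}(v), v) : v ∈ ℂ} ⊂ ℂ², i.e. the set of points (1 + v·T_{2k}(v) + v², (−2 + T_{2k}(v)² + 6v² + T_{2k}(v)·(3v + v³))/2) for v ∈ ℂ. Then: (1) for every positive integer d, any map g : ℂ² → ℂ² satisfying g(G(u,v)) = G(T_d(u), T_d(v)) for all u, v ∈ ℂ maps each C_{2k} onto itself, g(C_{2k}) = C_{2k}; and (2) the sets C_{2k}, k ≥ 1, are pairwise distinct; in particular there are infinitely many affine algebraic curves invariant under g_d for every d. -/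

import Mathlib

/-- The polynomial parametrization of ℂ²/D₃ ≅ ℂ². -/
noncomputable def G (u v : ℂ) : ℂ × ℂ :=
  (1 + u * v + v ^ 2, (-2 + u ^ 2 + 6 * v ^ 2 + u * v * (3 + v ^ 2)) / 2)

open Polynomial in
lemma exists_rep (w : ℂ) : ∃ s : ℂ, s ≠ 0 ∧ s + s⁻¹ = w := by
  have hdeg : (X ^ 2 - C w * X + 1 : ℂ[X]).degree = 2 := by compute_degree!
  obtain ⟨s, hs⟩ := IsAlgClosed.exists_root (k := ℂ) (X ^ 2 - C w * X + 1)
    (by rw [hdeg]; norm_num)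
  have h : s ^ 2 - w * s + 1 = 0 := by simpa [Polynomial.IsRoot] using hs
  have hs0 : s ≠ 0 := by rintro rfl; simp at h
  refine ⟨s, hs0, ?_⟩
  field_simp
  linear_combination h

lemma sigma_pow (n : ℕ) (hn : 0 < n) (j : ℕ)
    (h : Complex.exp (Real.pi * Complex.I / n) ^ j = 1) : 2 * n ∣ j := by
  rw [← Complex.exp_nat_mul, Complex.exp_eq_one_iff] at h
  obtain ⟨z, hz⟩ := h
  have hπ : (Real.pi : ℂ) ≠ 0 := by exact_mod_cast Real.pi_ne_zero
  have hnC : (n : ℂ) ≠ 0 := Nat.cast_ne_zero.mpr hn.ne'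
  have hI : (Complex.I : ℂ) ≠ 0 := Complex.I_ne_zero
  have hj : (j : ℂ) = 2 * z * n := by
    field_simp at hz
    apply mul_right_cancel₀ hπ
    apply mul_right_cancel₀ hI
    linear_combination (↑Real.pi * Complex.I) * hz
  have hj' : (j : ℤ) = 2 * n * z := by
    have : ((j : ℤ) : ℂ) = ((2 * n * z : ℤ) : ℂ) := by push_cast; linear_combination hj
    exact_mod_cast this
  have : (2 * n : ℤ) ∣ (j : ℤ) := ⟨z, hj'⟩
  exact_mod_cast this

lemma sigma_props (n : ℕ) (hn : 0 < n) :
    ∃ σ : ℂ, σ ≠ 0 ∧ σ ^ n = -1 ∧ ∀ j : ℕ, σ ^ j = 1 → 2 * n ∣ j := by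
  have hnC : (n : ℂ) ≠ 0 := Nat.cast_ne_zero.mpr hn.ne'
  refine ⟨Complex.exp (Real.pi * Complex.I / n), Complex.exp_ne_zero _, ?_, sigma_pow n hn⟩
  rw [← Complex.exp_nat_mul, show (n : ℂ) * (Real.pi * Complex.I / n)
    = Real.pi * Complex.I * (n / n) by ring, div_self hnC, mul_one]
  exact Complex.exp_pi_mul_I

section Cheb
variable (T : ℕ → Polynomial ℤ)
  (hT : ∀ n : ℕ, 0 < n → ∀ s : ℂ, s ≠ 0 →
      Polynomial.aeval (s + s⁻¹) (T n) = s ^ (n : ℤ) + s ^ (-(n : ℤ)))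

include hT in
lemma aeval_T {n : ℕ} (hn : 0 < n) {s : ℂ} (hs : s ≠ 0) :
    Polynomial.aeval (s + s⁻¹) (T n) = s ^ n + (s ^ n)⁻¹ := by
  have := hT n hn s hs
  rwa [zpow_neg, zpow_natCast] at this

include hT in
lemma T_comp {a b : ℕ} (ha : 0 < a) (hb : 0 < b) (v : ℂ) :
    Polynomial.aeval (Polynomial.aeval v (T a)) (T b) = Polynomial.aeval v (T (a * b)) := by
  obtain ⟨s, hs, rfl⟩ := exists_rep v
  have hsa : s ^ a ≠ 0 := pow_ne_zero _ hs
  rw [aeval_T T hT ha hs, aeval_T T hT hb hsa, aeval_T T hT (Nat.mul_pos ha hb) hs, ← pow_mul]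

include hT in
lemma T_surj {d : ℕ} (hd : 0 < d) (v : ℂ) : ∃ w : ℂ, Polynomial.aeval w (T d) = v := by
  obtain ⟨s, hs, rfl⟩ := exists_rep v
  obtain ⟨r, hr⟩ := IsAlgClosed.exists_pow_nat_eq (k := ℂ) s hd
  have hr0 : r ≠ 0 := by rintro rfl; rw [zero_pow hd.ne'] at hr; exact hs hr.symm
  exact ⟨r + r⁻¹, by rw [aeval_T T hT hd hr0, hr]⟩

include hT in
lemma part1 (d : ℕ) (hd : 0 < d) (g : ℂ × ℂ → ℂ × ℂ)
    (hg : ∀ u v : ℂ, g (G u v) = G (Polynomial.aeval u (T d)) (Polynomial.aeval v (T d)))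
    (k : ℕ) (hk : 1 ≤ k) :
    g '' {w : ℂ × ℂ | ∃ v : ℂ, G (Polynomial.aeval v (T (2 * k))) v = w}
      = {w : ℂ × ℂ | ∃ v : ℂ, G (Polynomial.aeval v (T (2 * k))) v = w} := by
  have h2k : 0 < 2 * k := by omega
  ext p
  simp only [Set.mem_image, Set.mem_setOf_eq]
  constructor
  · rintro ⟨q, ⟨v, rfl⟩, rfl⟩
    refine ⟨Polynomial.aeval v (T d), ?_⟩
    rw [hg, T_comp T hT h2k hd, T_comp T hT hd h2k, Nat.mul_comm d (2 * k)]
  · rintro ⟨v, rfl⟩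
    obtain ⟨v', hv'⟩ := T_surj T hT hd v
    refine ⟨G (Polynomial.aeval v' (T (2 * k))) v', ⟨v', rfl⟩, ?_⟩
    rw [hg, T_comp T hT h2k hd, ← Nat.mul_comm d (2 * k), ← T_comp T hT hd h2k, hv']

include hT in
lemma curves_ne {k l : ℕ} (hk : 1 ≤ k) (hkl : k < l) :
    {w : ℂ × ℂ | ∃ v : ℂ, G (Polynomial.aeval v (T (2 * k))) v = w}
      ≠ {w : ℂ × ℂ | ∃ v : ℂ, G (Polynomial.aeval v (T (2 * l))) v = w} := by
  obtain ⟨j, rfl⟩ : ∃ j, k = j + 1 := ⟨k - 1, by omega⟩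
  intro hEq
  obtain ⟨σ, hσ0, hσn, hσdvd⟩ := sigma_props (2 * l + 1) (by omega)
  -- the contradiction funnel
  have funnel : ∀ m : ℕ, Odd m → m < 2 * l + 1 →
      (σ ^ (2 * m) = 1 ∨ σ ^ (2 * m) = -1) → False := by
    intro m hm hmn h
    have h4 : σ ^ (4 * m) = 1 := by
      rcases h with h | h <;>
        · rw [show 4 * m = 2 * m * 2 by ring, pow_mul, h]; norm_num
    have h2 : (2 * l + 1) ∣ 2 * m := by
      have hdd := hσdvd _ h4
      rw [show 4 * m = 2 * (2 * m) by ring] at hdd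
      exact (Nat.mul_dvd_mul_iff_left (by norm_num : 0 < 2)).mp hdd
    have hcop : Nat.Coprime (2 * l + 1) 2 :=
      Nat.coprime_two_right.mpr (Nat.odd_iff.mpr (by omega))
    have hdm : (2 * l + 1) ∣ m :=
      hcop.dvd_of_dvd_mul_left h2
    have := Nat.le_of_dvd (by rcases hm with ⟨c, hc⟩; omega) hdm
    omega
  -- the point on C_{2l}
  set v₀ : ℂ := σ + σ⁻¹ with hv₀
  have hσ2l : σ ^ (2 * l) = -σ⁻¹ := by
    have h1 : σ ^ (2 * l) * σ = -1 := by rw [← pow_succ]; exact hσn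
    field_simp
    linear_combination h1
  have hTv : Polynomial.aeval v₀ (T (2 * l)) = -v₀ := by
    rw [hv₀, aeval_T T hT (by omega) hσ0, hσ2l, inv_neg, inv_inv]
    ring
  have hpR : G (Polynomial.aeval v₀ (T (2 * l))) v₀
      ∈ {w : ℂ × ℂ | ∃ v : ℂ, G (Polynomial.aeval v (T (2 * l))) v = w} := ⟨v₀, rfl⟩
  rw [← hEq] at hpR
  obtain ⟨w, hw⟩ := hpR
  rw [hTv] at hw
  unfold G at hw
  have hw1 : 1 + Polynomial.aeval w (T (2 * (j + 1))) * w + w ^ 2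
      = 1 + -v₀ * v₀ + v₀ ^ 2 := congrArg Prod.fst hw
  have hw2 : (-2 + Polynomial.aeval w (T (2 * (j + 1))) ^ 2 + 6 * w ^ 2
        + Polynomial.aeval w (T (2 * (j + 1))) * w * (3 + w ^ 2)) / 2
      = (-2 + (-v₀) ^ 2 + 6 * v₀ ^ 2 + -v₀ * v₀ * (3 + v₀ ^ 2)) / 2 := congrArg Prod.snd hw
  have hsplit : w * (Polynomial.aeval w (T (2 * (j + 1))) + w) = 0 := by
    linear_combination hw1
  rcases mul_eq_zero.mp hsplit with hw0 | hTww
  · -- w = 0 case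
    subst hw0
    have hI0 : (0 : ℂ) = Complex.I + Complex.I⁻¹ := by rw [Complex.inv_I]; ring
    have hTw0 : Polynomial.aeval (0 : ℂ) (T (2 * (j + 1)))
        = Complex.I ^ (2 * (j + 1)) + (Complex.I ^ (2 * (j + 1)))⁻¹ := by
      rw [hI0]; exact aeval_T T hT (by omega) Complex.I_ne_zero
    have ha2 : (Complex.I ^ (2 * (j + 1))) ^ 2 = 1 := by
      rw [← pow_mul, show 2 * (j + 1) * 2 = 4 * (j + 1) by ring, pow_mul,
        show Complex.I ^ 4 = 1 by norm_num [pow_succ], one_pow]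
    have hainv : (Complex.I ^ (2 * (j + 1)))⁻¹ = Complex.I ^ (2 * (j + 1)) :=
      inv_eq_of_mul_eq_one_right (by rw [← sq]; exact ha2)
    have hTsq : Polynomial.aeval (0 : ℂ) (T (2 * (j + 1))) ^ 2 = 4 := by
      rw [hTw0, hainv]; linear_combination 4 * ha2
    have hveq : (v₀ ^ 2 - 2) ^ 2 = 0 := by linear_combination 2 * hw2 - hTsq
    have hv2 : v₀ ^ 2 - 2 = 0 := by
      exact pow_eq_zero_iff two_ne_zero |>.mp hveq
    have hσ4 : σ ^ 4 = -1 := by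
      have h' : (σ + σ⁻¹) ^ 2 - 2 = 0 := hv2
      field_simp at h'
      linear_combination h'
    have h8 : σ ^ 8 = 1 := by
      rw [show (8 : ℕ) = 4 * 2 by norm_num, pow_mul, hσ4]; norm_num
    have := Nat.le_of_dvd (by norm_num) (hσdvd 8 h8)
    omega
  · -- T_{2k}(w) = -w case
    have hTww' : Polynomial.aeval w (T (2 * (j + 1))) = -w := by linear_combination hTww
    obtain ⟨s, hs0, rfl⟩ := exists_rep w
    have hTws : Polynomial.aeval (s + s⁻¹) (T (2 * (j + 1)))
        = s ^ (2 * j + 2) + (s ^ (2 * j + 2))⁻¹ := by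
      rw [show 2 * (j + 1) = 2 * j + 2 by ring] at *
      exact aeval_T T hT (by omega) hs0
    have hE : s ^ (2 * j + 2) + (s ^ (2 * j + 2))⁻¹ = -(s + s⁻¹) := by
      rw [← hTws]; exact hTww'
    have hfac : (s ^ (2 * j + 1) + 1) * (s ^ (2 * j + 3) + 1) = 0 := by
      field_simp at hE
      have h2 : s * ((s ^ (2 * j + 1) + 1) * (s ^ (2 * j + 3) + 1)) = 0 := by
        linear_combination hE
      exact (mul_eq_zero.mp h2).resolve_left hs0
    rw [hTww'] at hw2
    have hquad : ((s + s⁻¹) ^ 2 - v₀ ^ 2) * ((s + s⁻¹) ^ 2 + v₀ ^ 2 - 4) = 0 := by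
      linear_combination -2 * hw2
    obtain ⟨m, hmodd, hmlt, hsm⟩ : ∃ m : ℕ, Odd m ∧ m < 2 * l + 1 ∧ s ^ m = -1 := by
      rcases mul_eq_zero.mp hfac with h | h
      · exact ⟨2 * j + 1, Nat.odd_iff.mpr (by omega), by omega, by linear_combination h⟩
      · exact ⟨2 * j + 3, Nat.odd_iff.mpr (by omega), by omega, by linear_combination h⟩
    apply funnel m hmodd hmlt
    have hs2m : (s ^ 2) ^ m = 1 := by
      rw [← pow_mul, show 2 * m = m * 2 by ring, pow_mul, hsm]; norm_num
    have hσ2m : σ ^ (2 * m) = (σ ^ 2) ^ m := by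
      rw [← pow_mul]
    rcases mul_eq_zero.mp hquad with h | h
    · have h' : (s + s⁻¹) ^ 2 = (σ + σ⁻¹) ^ 2 := by rw [← hv₀]; linear_combination h
      have hfac2 : (s ^ 2 - σ ^ 2) * (s ^ 2 * σ ^ 2 - 1) = 0 := by
        field_simp at h'
        linear_combination h'
      left
      rcases mul_eq_zero.mp hfac2 with h2 | h2
      · have hss : s ^ 2 = σ ^ 2 := by linear_combination h2
        rw [hσ2m, ← hss]
        exact hs2m
      · have hss : s ^ 2 * σ ^ 2 = 1 := by linear_combination h2
        have h3 : (s ^ 2) ^ m * (σ ^ 2) ^ m = 1 := by rw [← mul_pow, hss, one_pow]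
        rw [hs2m, one_mul] at h3
        rw [hσ2m]
        exact h3
    · have h' : (s + s⁻¹) ^ 2 + (σ + σ⁻¹) ^ 2 - 4 = 0 := by rw [← hv₀]; linear_combination h
      have hfac2 : (s ^ 2 + σ ^ 2) * (s ^ 2 * σ ^ 2 + 1) = 0 := by
        field_simp at h'
        linear_combination h'
      right
      rcases mul_eq_zero.mp hfac2 with h2 | h2
      · have hss : s ^ 2 = -σ ^ 2 := by linear_combination h2
        have h3 : (s ^ 2) ^ m = (-σ ^ 2) ^ m := by rw [hss]
        rw [hs2m, Odd.neg_pow hmodd] at h3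
        rw [hσ2m]
        linear_combination h3
      · have hss : s ^ 2 * σ ^ 2 = -1 := by linear_combination h2
        have h3 : (s ^ 2) ^ m * (σ ^ 2) ^ m = (-1 : ℂ) ^ m := by
          rw [← mul_pow, hss]
        rw [hs2m, one_mul, Odd.neg_pow hmodd] at h3
        rw [hσ2m]
        linear_combination h3

end Cheb

/-- For each `k ≥ 1` the affine algebraic curve `C_{2k} = {G(T_{2k}(v), v) : v ∈ ℂ}`
is mapped onto itself by every induced map `g_d`, and the curves `C_{2k}` are
pairwise distinct; hence there are infinitely many invariant affine algebraic curves. -/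
theorem infinitely_many_invariant_curves (T : ℕ → Polynomial ℤ)
    (hT : ∀ n : ℕ, 0 < n → ∀ s : ℂ, s ≠ 0 →
      Polynomial.aeval (s + s⁻¹) (T n) = s ^ (n : ℤ) + s ^ (-(n : ℤ))) :
    (∀ d : ℕ, 0 < d → ∀ g : ℂ × ℂ → ℂ × ℂ,
      (∀ u v : ℂ, g (G u v) = G (Polynomial.aeval u (T d)) (Polynomial.aeval v (T d))) →
      ∀ k : ℕ, 1 ≤ k →
        g '' {w : ℂ × ℂ | ∃ v : ℂ, G (Polynomial.aeval v (T (2 * k))) v = w}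
          = {w : ℂ × ℂ | ∃ v : ℂ, G (Polynomial.aeval v (T (2 * k))) v = w}) ∧
    (∀ k l : ℕ, 1 ≤ k → 1 ≤ l → k ≠ l →
      {w : ℂ × ℂ | ∃ v : ℂ, G (Polynomial.aeval v (T (2 * k))) v = w}
        ≠ {w : ℂ × ℂ | ∃ v : ℂ, G (Polynomial.aeval v (T (2 * l))) v = w}) := by
  constructor
  · exact part1 T hT
  · intro k l hk hl hne
    rcases hne.lt_or_gt with h | h
    · exact curves_ne T hT hk h
    · exact (curves_ne T hT hl h).symm
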